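/- arXiv:1511.09254 — 4 statements merged into one kernel-verified Lean document; each statement's English description precedes it below -/
import Mathlib

section
/- Let f₄ = (yz - x²)² - x³y ∈ ℂ[x,y,z]. Then the three triples R₁ = (y(3x - 4z), 3y(4x - 3y), z(9y - 20x)), R₂ = (-x(x + 2z), -4x² + 3xy + 10yz, -z(3x + 10z)), R₃ = (xy, -3y², 2x² + 3yz) are each syzygies of the partial derivatives of f₄, i.e. each satisfies a·∂f₄/∂x + b·∂f₄/∂y + c·∂f₄/∂z = 0. -/
open MvPolynomial

noncomputable abbrev x : MvPolynomial (Fin 3) ℂ := X 0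
noncomputable abbrev y : MvPolynomial (Fin 3) ℂ := X 1
noncomputable abbrev z : MvPolynomial (Fin 3) ℂ := X 2

lemma pd_expand (i : Fin 3) :
    pderiv i ((y * z - x ^ 2) ^ 2 - x ^ 3 * y) =
      2 * (y * z - x ^ 2) * (pderiv i y * z + y * pderiv i z - 2 * x * pderiv i x)
      - (3 * x ^ 2 * pderiv i x * y + x ^ 3 * pderiv i y) := by
  have h2 : (y * z - x ^ 2) ^ 2 = (y*z-x^2)*(y*z-x^2) := by ring
  have h3 : (x:MvPolynomial (Fin 3) ℂ) ^ 3 = x*(x*x) := by ring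
  have hx2 : (x:MvPolynomial (Fin 3) ℂ) ^ 2 = x*x := by ring
  rw [h2, h3, hx2]
  simp only [map_sub, map_add, map_mul, pderiv_mul]
  ring

theorem stmt_4 :
    let f : MvPolynomial (Fin 3) ℂ := (y * z - x ^ 2) ^ 2 - x ^ 3 * y
    ((y * (3 * x - 4 * z)) * pderiv 0 f + (3 * y * (4 * x - 3 * y)) * pderiv 1 f
      + (z * (9 * y - 20 * x)) * pderiv 2 f = 0) ∧
    ((-(x * (x + 2 * z))) * pderiv 0 f + (-(4 * x ^ 2) + 3 * x * y + 10 * y * z) * pderiv 1 f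
      + (-(z * (3 * x + 10 * z))) * pderiv 2 f = 0) ∧
    ((x * y) * pderiv 0 f + (-(3 * y ^ 2)) * pderiv 1 f
      + (2 * x ^ 2 + 3 * y * z) * pderiv 2 f = 0) := by
  refine ⟨?_, ?_, ?_⟩ <;>
  · simp only [pd_expand, pderiv_X_self,
      pderiv_X_of_ne (show (0:Fin 3) ≠ 1 by decide), pderiv_X_of_ne (show (0:Fin 3) ≠ 2 by decide),
      pderiv_X_of_ne (show (1:Fin 3) ≠ 0 by decide), pderiv_X_of_ne (show (1:Fin 3) ≠ 2 by decide),
      pderiv_X_of_ne (show (2:Fin 3) ≠ 0 by decide), pderiv_X_of_ne (show (2:Fin 3) ≠ 1 by decide)]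
    ring
end

section
/- For every k ≥ 1, with f_{4k} = (yᵏzᵏ - x^{2k})² - x^{3k}yᵏ ∈ ℂ[x,y,z], the three triples R_{k,1} = (yᵏ(3xᵏ - 4zᵏ), 3x^{k-1}y(4xᵏ - 3yᵏ), x^{k-1}z(9yᵏ - 20xᵏ)), R_{k,2} = (-xy^{k-1}(xᵏ + 2zᵏ), -4x^{2k} + 3xᵏyᵏ + 10yᵏzᵏ, -y^{k-1}z(3xᵏ + 10zᵏ)), R_{k,3} = (xyᵏz^{k-1}, -3y^{k+1}z^{k-1}, 2x^{2k} + 3yᵏzᵏ) are each syzygies of the partial derivatives of f_{4k}. -/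
open MvPolynomial

theorem stmt_6 (k : ℕ) (hk : 1 ≤ k) :
    let f : MvPolynomial (Fin 3) ℂ := (y ^ k * z ^ k - x ^ (2 * k)) ^ 2 - x ^ (3 * k) * y ^ k
    ((y ^ k * (3 * x ^ k - 4 * z ^ k)) * pderiv 0 f
      + (3 * x ^ (k - 1) * y * (4 * x ^ k - 3 * y ^ k)) * pderiv 1 f
      + (x ^ (k - 1) * z * (9 * y ^ k - 20 * x ^ k)) * pderiv 2 f = 0) ∧
    ((-(x * y ^ (k - 1) * (x ^ k + 2 * z ^ k))) * pderiv 0 f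
      + (-(4 * x ^ (2 * k)) + 3 * x ^ k * y ^ k + 10 * y ^ k * z ^ k) * pderiv 1 f
      + (-(y ^ (k - 1) * z * (3 * x ^ k + 10 * z ^ k))) * pderiv 2 f = 0) ∧
    ((x * y ^ k * z ^ (k - 1)) * pderiv 0 f
      + (-(3 * y ^ (k + 1) * z ^ (k - 1))) * pderiv 1 f
      + (2 * x ^ (2 * k) + 3 * y ^ k * z ^ k) * pderiv 2 f = 0) := by
  obtain ⟨m, rfl⟩ : ∃ m, k = m + 1 := ⟨k - 1, by omega⟩
  intro f
  simp only [f]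
  refine ⟨?_, ?_, ?_⟩ <;>
  · simp [pderiv_mul, pderiv_pow, show 2*(m+1)=2*m+2 by ring, show 3*(m+1)=3*m+3 by ring,
      Nat.add_sub_cancel, pderiv_X, Fin.val_zero]
    ring
end

section
/- For every k ≥ 1, the triples R_{k,1} = (yᵏ(3xᵏ - 4zᵏ), 3x^{k-1}y(4xᵏ - 3yᵏ), x^{k-1}z(9yᵏ - 20xᵏ)), R_{k,2} = (-xy^{k-1}(xᵏ + 2zᵏ), -4x^{2k} + 3xᵏyᵏ + 10yᵏzᵏ, -y^{k-1}z(3xᵏ + 10zᵏ)), R_{k,3} = (xyᵏz^{k-1}, -3y^{k+1}z^{k-1}, 2x^{2k} + 3yᵏzᵏ) in ℂ[x,y,z]³ satisfy x·R_{k,1} + 3y·R_{k,2} + 10z·R_{k,3} = 0 componentwise. -/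
open MvPolynomial

theorem stmt_7 (k : ℕ) (hk : 1 ≤ k) :
    let R1 : Fin 3 → MvPolynomial (Fin 3) ℂ :=
      ![y ^ k * (3 * x ^ k - 4 * z ^ k), 3 * x ^ (k - 1) * y * (4 * x ^ k - 3 * y ^ k),
        x ^ (k - 1) * z * (9 * y ^ k - 20 * x ^ k)]
    let R2 : Fin 3 → MvPolynomial (Fin 3) ℂ :=
      ![-(x * y ^ (k - 1) * (x ^ k + 2 * z ^ k)),
        -(4 * x ^ (2 * k)) + 3 * x ^ k * y ^ k + 10 * y ^ k * z ^ k,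
        -(y ^ (k - 1) * z * (3 * x ^ k + 10 * z ^ k))]
    let R3 : Fin 3 → MvPolynomial (Fin 3) ℂ :=
      ![x * y ^ k * z ^ (k - 1), -(3 * y ^ (k + 1) * z ^ (k - 1)),
        2 * x ^ (2 * k) + 3 * y ^ k * z ^ k]
    ∀ i : Fin 3, x * R1 i + 3 * y * R2 i + 10 * z * R3 i = 0 := by
  obtain ⟨m, rfl⟩ : ∃ m, k = m + 1 := ⟨k - 1, (Nat.succ_pred_eq_of_pos hk).symm⟩
  intro R1 R2 R3 i
  fin_cases i <;> simp [R1, R2, R3, Nat.add_sub_cancel] <;> ring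
end

section
/- For every k ≥ 1, with f_{2k} = x^{2k} + y^{2k} + z^{2k} - 2(xᵏyᵏ + xᵏzᵏ + yᵏzᵏ) ∈ ℂ[x,y,z], the three triples R_{k,1} = (yᵏ - zᵏ, x^{k-1}y, -x^{k-1}z), R_{k,2} = (-xy^{k-1}, zᵏ - xᵏ, y^{k-1}z), R_{k,3} = (xz^{k-1}, -yz^{k-1}, xᵏ - yᵏ) are each syzygies of the partial derivatives of f_{2k}, and they satisfy x·R_{k,1} + y·R_{k,2} + z·R_{k,3} = 0. -/
open MvPolynomial

theorem stmt_9 (k : ℕ) (hk : 1 ≤ k) :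
    let f : MvPolynomial (Fin 3) ℂ :=
      x ^ (2 * k) + y ^ (2 * k) + z ^ (2 * k)
        - 2 * (x ^ k * y ^ k + x ^ k * z ^ k + y ^ k * z ^ k)
    let R1 : Fin 3 → MvPolynomial (Fin 3) ℂ :=
      ![y ^ k - z ^ k, x ^ (k - 1) * y, -(x ^ (k - 1) * z)]
    let R2 : Fin 3 → MvPolynomial (Fin 3) ℂ :=
      ![-(x * y ^ (k - 1)), z ^ k - x ^ k, y ^ (k - 1) * z]
    let R3 : Fin 3 → MvPolynomial (Fin 3) ℂ :=
      ![x * z ^ (k - 1), -(y * z ^ (k - 1)), x ^ k - y ^ k]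
    (R1 0 * pderiv 0 f + R1 1 * pderiv 1 f + R1 2 * pderiv 2 f = 0) ∧
    (R2 0 * pderiv 0 f + R2 1 * pderiv 1 f + R2 2 * pderiv 2 f = 0) ∧
    (R3 0 * pderiv 0 f + R3 1 * pderiv 1 f + R3 2 * pderiv 2 f = 0) ∧
    (∀ i : Fin 3, x * R1 i + y * R2 i + z * R3 i = 0) := by
  obtain ⟨m, rfl⟩ : ∃ m, k = m + 1 := ⟨k - 1, by omega⟩
  intro f R1 R2 R3
  have h2 : 2 * (m + 1) = (2 * m + 1) + 1 := by ring
  have hp2 : ∀ i : Fin 3, pderiv i (2 : MvPolynomial (Fin 3) ℂ) = 0 := by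
    intro i
    rw [← one_add_one_eq_two, map_add, pderiv_one, add_zero]
  have key : ∀ (i : Fin 3) (u v w : MvPolynomial (Fin 3) ℂ),
      pderiv i x = u → pderiv i y = v → pderiv i z = w →
      pderiv i f = (2*(m+1) : ℕ) * (x ^ (2*m+1) * u + y ^ (2*m+1) * v + z ^ (2*m+1) * w)
        - 2 * ((m+1 : ℕ) * (x ^ m * u * (y^(m+1) + z^(m+1)) + y ^ m * v * (x^(m+1) + z^(m+1))
          + z ^ m * w * (x^(m+1) + y^(m+1)))) := by
    intro i u v w hu hv hw
    simp only [f, map_add, map_sub, Derivation.leibniz, pderiv_pow, hu, hv, hw,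
      h2, Nat.add_sub_cancel, smul_eq_mul, hp2]
    ring
  have hd0 := key 0 1 0 0 (by simp) (by simp) (by simp)
  have hd1 := key 1 0 1 0 (by simp) (by simp) (by simp)
  have hd2 := key 2 0 0 1 (by simp) (by simp) (by simp)
  have hx : x ^ (m + 1) = x * x ^ m := by ring
  have hy : y ^ (m + 1) = y * y ^ m := by ring
  have hz : z ^ (m + 1) = z * z ^ m := by ring
  have h2x : x ^ (2 * m + 1) = x ^ m * x ^ m * x := by rw [← pow_add, ← pow_succ]; ring_nf
  have h2y : y ^ (2 * m + 1) = y ^ m * y ^ m * y := by rw [← pow_add, ← pow_succ]; ring_nf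
  have h2z : z ^ (2 * m + 1) = z ^ m * z ^ m * z := by rw [← pow_add, ← pow_succ]; ring_nf
  refine ⟨?_, ?_, ?_, ?_⟩
  · simp only [R1, Matrix.cons_val_zero, Matrix.cons_val_one, Matrix.head_cons,
      Matrix.cons_val_two, Matrix.tail_cons, hd0, hd1, hd2, Nat.add_sub_cancel,
      hx, hy, hz, h2x, h2y, h2z]
    push_cast
    ring
  · simp only [R2, Matrix.cons_val_zero, Matrix.cons_val_one, Matrix.head_cons,
      Matrix.cons_val_two, Matrix.tail_cons, hd0, hd1, hd2, Nat.add_sub_cancel,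
      hx, hy, hz, h2x, h2y, h2z]
    push_cast
    ring
  · simp only [R3, Matrix.cons_val_zero, Matrix.cons_val_one, Matrix.head_cons,
      Matrix.cons_val_two, Matrix.tail_cons, hd0, hd1, hd2, Nat.add_sub_cancel,
      hx, hy, hz, h2x, h2y, h2z]
    push_cast
    ring
  · intro i
    fin_cases i <;>
      · simp only [R1, R2, R3, Nat.add_sub_cancel, hx, hy, hz, Fin.zero_eta, Fin.mk_one,
          Fin.isValue, show (⟨2, by omega⟩ : Fin 3) = 2 from rfl, Matrix.cons_val_zero,
          Matrix.cons_val_one, Matrix.head_cons, Matrix.cons_val_two, Matrix.tail_cons]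
        ring
end
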